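/- Let A = A_1 × ... × A_m with A_i = A_{m-i+1}. Let H, G be prefix-free sets of partial points with |H|·|G| ≤ |A|/4, and suppose ∪H = ∪G_rev (where ∪H is the union of the subcubes indexed by H, and G_rev := {rev(b) : b ∈ G}). Then either |∪H| ≥ (K/2)(1 + √(1 - 4|H||G|/K)) or |∪H| ≤ (K/2)(1 - √(1 - 4|H||G|/K)), where K := |A|. In particular min(|∪H|, |A| - |∪H|) ≤ |H|·|G| + O(|H|²|G|²/|A|). -/

import Mathlib

/-- A partial point of the product set `A 1 × ⋯ × A m`: a tuple of some length `ℓ ≤ m`. -/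
abbrev PPoint (α : Type) (m : ℕ) := (ℓ : Fin (m + 1)) × (Fin ℓ.val → α)

variable {α : Type} {m : ℕ}

/-- The subcube of `A = A 1 × ⋯ × A m` indexed by a partial point `p`: all points of `A`
whose first `|p|` coordinates agree with `p`. -/
def cubeOf [DecidableEq α] (A : Fin m → Finset α) (p : PPoint α m) : Finset (Fin m → α) :=
  (Fintype.piFinset A).filter
    (fun x => ∀ j : Fin p.1.val, x (Fin.castLE (Nat.lt_succ_iff.mp p.1.isLt) j) = p.2 j)

/-- The reversed subcube indexed by a partial point `p` of length `k`: all points of `A`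
whose last `k` coordinates equal the reversal of `p`. -/
def cubeRevOf [DecidableEq α] (A : Fin m → Finset α) (p : PPoint α m) : Finset (Fin m → α) :=
  (Fintype.piFinset A).filter
    (fun x => ∀ j : Fin p.1.val,
      x ⟨m - 1 - j.val, by have h1 := j.isLt; have h2 := p.1.isLt; omega⟩ = p.2 j)

/-- `p` is a prefix of `q`. -/
def IsPrefixP (p q : PPoint α m) : Prop :=
  ∃ h : p.1.val ≤ q.1.val, ∀ j : Fin p.1.val, q.2 (Fin.castLE h j) = p.2 j

/-- A set of partial points is prefix-free if none is a proper prefix of another. -/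
def PrefixFreeP (H : Finset (PPoint α m)) : Prop :=
  ∀ p ∈ H, ∀ q ∈ H, IsPrefixP p q → p = q

/-- The union `∪H` of the subcubes indexed by a set of partial points. -/
def unionCube [DecidableEq α] (A : Fin m → Finset α) (H : Finset (PPoint α m)) :
    Finset (Fin m → α) :=
  H.biUnion (cubeOf A)

/-- The union `∪H_rev` of the reversed subcubes indexed by a set of partial points. -/
def unionCubeRev [DecidableEq α] (A : Fin m → Finset α) (H : Finset (PPoint α m)) :
    Finset (Fin m → α) :=
  H.biUnion (cubeRevOf A)

variable {α : Type} {m : ℕ}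

def fcube [DecidableEq α] (A : Fin m → Finset α) (p : PPoint α m) (i : Fin m) : Finset α :=
  if h : i.val < p.1.val then (A i) ∩ {p.2 ⟨i.val, h⟩} else A i

def frev [DecidableEq α] (A : Fin m → Finset α) (p : PPoint α m) (i : Fin m) : Finset α :=
  if h : m - 1 - i.val < p.1.val then (A i) ∩ {p.2 ⟨m - 1 - i.val, h⟩} else A i

lemma cubeOf_eq_pi [DecidableEq α] (A : Fin m → Finset α) (p : PPoint α m) :
    cubeOf A p = Fintype.piFinset (fcube A p) := by
  ext x
  simp only [cubeOf, Finset.mem_filter, Fintype.mem_piFinset, fcube]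
  constructor
  · rintro ⟨h1, h2⟩ i
    by_cases h : i.val < p.1.val
    · have := h2 ⟨i.val, h⟩
      have hi : (Fin.castLE (Nat.lt_succ_iff.mp p.1.isLt) (⟨i.val, h⟩ : Fin p.1.val)) = i :=
        Fin.ext rfl
      rw [hi] at this
      simp only [h, dif_pos]
      exact Finset.mem_inter.mpr ⟨h1 i, by simp [this]⟩
    · simp [h, h1 i]
  · intro h
    constructor
    · intro i
      have := h i
      by_cases hc : i.val < p.1.val
      · simp only [hc, dif_pos] at this
        exact (Finset.mem_inter.mp this).1
      · simpa [hc] using this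
    · intro j
      have hjm : j.val < m := lt_of_lt_of_le j.isLt (Nat.lt_succ_iff.mp p.1.isLt)
      have := h ⟨j.val, hjm⟩
      simp only [j.isLt, dif_pos] at this
      have := (Finset.mem_inter.mp this).2
      exact Finset.mem_singleton.mp this

lemma cubeRevOf_eq_pi [DecidableEq α] (A : Fin m → Finset α) (p : PPoint α m) :
    cubeRevOf A p = Fintype.piFinset (frev A p) := by
  ext x
  simp only [cubeRevOf, Finset.mem_filter, Fintype.mem_piFinset, frev]
  constructor
  · rintro ⟨h1, h2⟩ i
    by_cases h : m - 1 - i.val < p.1.val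
    · have := h2 ⟨m - 1 - i.val, h⟩
      have hi : (⟨m - 1 - (m - 1 - i.val), by have := i.isLt; omega⟩ : Fin m) = i := by
        have := i.isLt; exact Fin.ext (show m - 1 - (m - 1 - i.val) = i.val by omega)
      rw [hi] at this
      simp only [h, dif_pos]
      exact Finset.mem_inter.mpr ⟨h1 i, by simp [this]⟩
    · simp [h, h1 i]
  · intro h
    constructor
    · intro i
      have := h i
      by_cases hc : m - 1 - i.val < p.1.val
      · simp only [hc, dif_pos] at this
        exact (Finset.mem_inter.mp this).1
      · simpa [hc] using this
    · intro j
      have hm : j.val < m := lt_of_lt_of_le j.isLt (Nat.lt_succ_iff.mp p.1.isLt)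
      have hc : m - 1 - (m - 1 - j.val) < p.1.val := by
        have := j.isLt; omega
      have := h ⟨m - 1 - j.val, by omega⟩
      simp only [hc, dif_pos] at this
      have h2 := (Finset.mem_inter.mp this).2
      have hj : (⟨m - 1 - (m - 1 - j.val), hc⟩ : Fin p.1.val) = j :=
        Fin.ext (show m - 1 - (m - 1 - j.val) = j.val by omega)
      rw [hj] at h2
      simpa using h2

lemma prefix_of_mem_cubes [DecidableEq α] {A : Fin m → Finset α} {p q : PPoint α m}
    (hle : p.1.val ≤ q.1.val) {x : Fin m → α}
    (hp : x ∈ cubeOf A p) (hq : x ∈ cubeOf A q) : IsPrefixP p q := by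
  refine ⟨hle, fun j => ?_⟩
  have h1 := (Finset.mem_filter.mp hp).2 j
  have h2 := (Finset.mem_filter.mp hq).2 (Fin.castLE hle j)
  have : (Fin.castLE (Nat.lt_succ_iff.mp q.1.isLt) (Fin.castLE hle j)) =
      (Fin.castLE (Nat.lt_succ_iff.mp p.1.isLt) j) := Fin.ext rfl
  rw [this] at h2
  rw [h2] at h1
  exact h1

lemma prefix_of_mem_cubesRev [DecidableEq α] {A : Fin m → Finset α} {p q : PPoint α m}
    (hle : p.1.val ≤ q.1.val) {x : Fin m → α}
    (hp : x ∈ cubeRevOf A p) (hq : x ∈ cubeRevOf A q) : IsPrefixP p q := by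
  refine ⟨hle, fun j => ?_⟩
  have h1 := (Finset.mem_filter.mp hp).2 j
  have h2 := (Finset.mem_filter.mp hq).2 (Fin.castLE hle j)
  exact h2.symm.trans h1

lemma disj_cube [DecidableEq α] {A : Fin m → Finset α} {H : Finset (PPoint α m)}
    (hH : PrefixFreeP H) {p q : PPoint α m} (hp : p ∈ H) (hq : q ∈ H) (hne : p ≠ q) :
    Disjoint (cubeOf A p) (cubeOf A q) := by
  rw [Finset.disjoint_left]
  intro x hxp hxq
  rcases le_total p.1.val q.1.val with h | h
  · exact hne (hH p hp q hq (prefix_of_mem_cubes h hxp hxq))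
  · exact hne (hH q hq p hp (prefix_of_mem_cubes h hxq hxp)).symm

lemma disj_cubeRev [DecidableEq α] {A : Fin m → Finset α} {H : Finset (PPoint α m)}
    (hH : PrefixFreeP H) {p q : PPoint α m} (hp : p ∈ H) (hq : q ∈ H) (hne : p ≠ q) :
    Disjoint (cubeRevOf A p) (cubeRevOf A q) := by
  rw [Finset.disjoint_left]
  intro x hxp hxq
  rcases le_total p.1.val q.1.val with h | h
  · exact hne (hH p hp q hq (prefix_of_mem_cubesRev h hxp hxq))
  · exact hne (hH q hq p hp (prefix_of_mem_cubesRev h hxq hxp)).symm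

lemma card_unionCube [DecidableEq α] {A : Fin m → Finset α} {H : Finset (PPoint α m)}
    (hH : PrefixFreeP H) : (unionCube A H).card = ∑ p ∈ H, (cubeOf A p).card :=
  Finset.card_biUnion (fun p hp q hq hne => disj_cube hH hp hq hne)

lemma piFinset_inter' [DecidableEq α] (f g : Fin m → Finset α) :
    Fintype.piFinset f ∩ Fintype.piFinset g = Fintype.piFinset (fun i => f i ∩ g i) := by
  ext x
  simp only [Finset.mem_inter, Fintype.mem_piFinset]
  exact ⟨fun ⟨h1, h2⟩ i => ⟨h1 i, h2 i⟩, fun h => ⟨fun i => (h i).1, fun i => (h i).2⟩⟩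

lemma key_pair [DecidableEq α] (A : Fin m → Finset α) (p q : PPoint α m) :
    (Fintype.piFinset A).card * (cubeOf A p ∩ cubeRevOf A q).card ≤
      (cubeOf A p).card * (cubeRevOf A q).card +
        (Fintype.piFinset A).card * (if p.1.val + q.1.val ≤ m then 0 else 1) := by
  rw [cubeOf_eq_pi, cubeRevOf_eq_pi, piFinset_inter']
  rw [Fintype.card_piFinset, Fintype.card_piFinset, Fintype.card_piFinset, Fintype.card_piFinset]
  by_cases hov : p.1.val + q.1.val ≤ m
  · simp only [hov, if_pos, Nat.mul_zero, Nat.add_zero]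
    rw [← Finset.prod_mul_distrib, ← Finset.prod_mul_distrib]
    apply le_of_eq
    apply Finset.prod_congr rfl
    intro i _
    unfold fcube frev
    by_cases h1 : i.val < p.1.val
    · have h2 : ¬ (m - 1 - i.val < q.1.val) := by have := i.isLt; omega
      simp only [h1, h2, dif_pos, dif_neg, not_false_iff]
      rw [Finset.inter_comm (A i ∩ _) (A i), ← Finset.inter_assoc, Finset.inter_self,
        Nat.mul_comm]
    · by_cases h2 : m - 1 - i.val < q.1.val
      · simp only [h1, h2, dif_pos, dif_neg, not_false_iff]
        rw [← Finset.inter_assoc, Finset.inter_self]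
      · simp only [h1, h2, dif_neg, not_false_iff]
        rw [Finset.inter_self]
  · simp only [hov, if_neg, Nat.mul_one]
    have hle1 : ∏ i, ((fcube A p i) ∩ (frev A q i)).card ≤ 1 := by
      apply Finset.prod_le_one (fun i _ => Nat.zero_le _)
      intro i _
      rcases Nat.lt_or_ge i.val p.1.val with h1 | h1
      · calc ((fcube A p i) ∩ (frev A q i)).card ≤ (fcube A p i).card :=
              Finset.card_le_card Finset.inter_subset_left
          _ ≤ 1 := by
              unfold fcube
              simp only [h1, dif_pos]
              calc (A i ∩ {p.2 ⟨i.val, h1⟩}).card ≤ ({p.2 ⟨i.val, h1⟩} : Finset α).card :=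
                    Finset.card_le_card Finset.inter_subset_right
                _ = 1 := Finset.card_singleton _
      · have h2 : m - 1 - i.val < q.1.val := by have := i.isLt; omega
        calc ((fcube A p i) ∩ (frev A q i)).card ≤ (frev A q i).card :=
              Finset.card_le_card Finset.inter_subset_right
          _ ≤ 1 := by
              unfold frev
              simp only [h2, dif_pos]
              calc (A i ∩ {q.2 ⟨m - 1 - i.val, h2⟩}).card ≤
                    ({q.2 ⟨m - 1 - i.val, h2⟩} : Finset α).card :=
                    Finset.card_le_card Finset.inter_subset_right
                _ = 1 := Finset.card_singleton _
    calc (∏ i, (A i).card) * ∏ i, ((fcube A p i) ∩ (frev A q i)).card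
        ≤ (∏ i, (A i).card) * 1 := Nat.mul_le_mul_left _ hle1
      _ ≤ (∏ i, (fcube A p i).card) * ∏ i, (frev A q i).card + (∏ i, (A i).card) * 1 :=
          Nat.le_add_left _ _

lemma main_nat_ineq [DecidableEq α] (A : Fin m → Finset α) (H G : Finset (PPoint α m))
    (hH : PrefixFreeP H) (hG : PrefixFreeP G)
    (hEq : unionCube A H = unionCubeRev A G) :
    (unionCube A H).card * (Fintype.piFinset A).card ≤
      (unionCube A H).card * (unionCube A H).card +
        (Fintype.piFinset A).card * (H.card * G.card) := by
  set K := (Fintype.piFinset A).card with hK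
  -- s = ∑_p ∑_q |cube p ∩ cubeRev q|
  have hsub : ∀ p ∈ H, cubeOf A p ⊆ unionCubeRev A G := by
    intro p hp
    rw [← hEq]
    exact Finset.subset_biUnion_of_mem (cubeOf A) hp
  have hcard_p : ∀ p ∈ H, (cubeOf A p).card = ∑ q ∈ G, (cubeOf A p ∩ cubeRevOf A q).card := by
    intro p hp
    have h1 : cubeOf A p = G.biUnion fun q => cubeOf A p ∩ cubeRevOf A q := by
      rw [← Finset.inter_biUnion, ← unionCubeRev, Finset.inter_eq_left.mpr (hsub p hp)]
    conv_lhs => rw [h1]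
    exact Finset.card_biUnion (fun q hq r hr hne =>
      Finset.disjoint_of_subset_left Finset.inter_subset_right
        (Finset.disjoint_of_subset_right Finset.inter_subset_right
          (disj_cubeRev hG hq hr hne)))
  have hs : (unionCube A H).card = ∑ p ∈ H, ∑ q ∈ G, (cubeOf A p ∩ cubeRevOf A q).card := by
    rw [card_unionCube hH]
    exact Finset.sum_congr rfl hcard_p
  have hs2 : (unionCube A H).card * (unionCube A H).card =
      ∑ p ∈ H, ∑ q ∈ G, (cubeOf A p).card * (cubeRevOf A q).card := by
    nth_rewrite 1 [card_unionCube hH]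
    have hrev : (unionCube A H).card = ∑ q ∈ G, (cubeRevOf A q).card := by
      rw [hEq]
      exact Finset.card_biUnion (fun p hp q hq hne => disj_cubeRev hG hp hq hne)
    rw [hrev, Finset.sum_mul_sum]
  calc (unionCube A H).card * K = ∑ p ∈ H, ∑ q ∈ G, K * (cubeOf A p ∩ cubeRevOf A q).card := by
        rw [hs, Finset.sum_mul]
        congr 1; ext p
        rw [Finset.sum_mul]
        congr 1; ext q
        ring
    _ ≤ ∑ p ∈ H, ∑ q ∈ G, ((cubeOf A p).card * (cubeRevOf A q).card + K * 1) := by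
        apply Finset.sum_le_sum
        intro p _
        apply Finset.sum_le_sum
        intro q _
        calc K * (cubeOf A p ∩ cubeRevOf A q).card ≤
              (cubeOf A p).card * (cubeRevOf A q).card +
                K * (if p.1.val + q.1.val ≤ m then 0 else 1) := key_pair A p q
          _ ≤ (cubeOf A p).card * (cubeRevOf A q).card + K * 1 := by
              gcongr
              split <;> omega
    _ = (unionCube A H).card * (unionCube A H).card + K * (H.card * G.card) := by
        simp only [Finset.sum_add_distrib, Finset.sum_const, smul_eq_mul, mul_one]
        rw [← hs2]
        ring

lemma real_part (K s P : ℝ) (hs0 : 0 ≤ s) (hsK : s ≤ K) (hP0 : 0 ≤ P)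
    (h4 : 4 * P ≤ K) (hquad : s * K ≤ s * s + K * P) :
    (K / 2 * (1 + Real.sqrt (1 - 4 * P / K)) ≤ s ∨
      s ≤ K / 2 * (1 - Real.sqrt (1 - 4 * P / K))) ∧
    min s (K - s) ≤ P + 4 * P ^ 2 / K := by
  rcases eq_or_lt_of_le (le_trans hs0 hsK) with hK | hK
  · -- K = 0
    have hK0 : K = 0 := hK.symm
    have hs : s = 0 := le_antisymm (hK0 ▸ hsK) hs0
    have hP : P = 0 := le_antisymm (by linarith) hP0
    subst hK0 hs hP
    norm_num
  · -- K > 0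
    have hD0 : (0:ℝ) ≤ 1 - 4 * P / K := by
      rw [sub_nonneg, div_le_one hK]; linarith
    have hDd : (1 - 4 * P / K) * K ^ 2 = K ^ 2 - 4 * P * K := by
      field_simp
    constructor
    · rcases le_or_gt s (K / 2) with hcase | hcase
      · right
        have hnum : (0:ℝ) ≤ (K - 2 * s) / K := by
          apply div_nonneg (by linarith) (le_of_lt hK)
        have h1 : Real.sqrt (1 - 4 * P / K) ≤ (K - 2 * s) / K := by
          rw [show (K - 2 * s) / K = Real.sqrt (((K - 2 * s) / K) ^ 2) from
            (Real.sqrt_sq hnum).symm]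
          apply Real.sqrt_le_sqrt
          rw [div_pow, le_div_iff₀ (by positivity)]
          nlinarith [hquad]
        have h2 : K / 2 * ((K - 2 * s) / K) = K / 2 - s := by
          field_simp
        have h3 := mul_le_mul_of_nonneg_left h1 (by positivity : (0:ℝ) ≤ K / 2)
        rw [h2] at h3
        nlinarith [h3]
      · left
        have hnum : (0:ℝ) ≤ (2 * s - K) / K := by
          apply div_nonneg (by linarith) (le_of_lt hK)
        have h1 : Real.sqrt (1 - 4 * P / K) ≤ (2 * s - K) / K := by
          rw [show (2 * s - K) / K = Real.sqrt (((2 * s - K) / K) ^ 2) from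
            (Real.sqrt_sq hnum).symm]
          apply Real.sqrt_le_sqrt
          rw [div_pow, le_div_iff₀ (by positivity)]
          nlinarith [hquad]
        have h2 : K / 2 * ((2 * s - K) / K) = s - K / 2 := by
          field_simp
        have h3 := mul_le_mul_of_nonneg_left h1 (by positivity : (0:ℝ) ≤ K / 2)
        rw [h2] at h3
        nlinarith [h3]
    · have key : ∀ t : ℝ, 0 ≤ t → 2 * t ≤ K → t * K ≤ t * t + K * P →
          t ≤ P + 4 * P ^ 2 / K := by
        intro t ht0 htK hq
        have hmul : 0 ≤ t * (K - 2 * t) := mul_nonneg ht0 (by linarith)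
        have ht2 : t ≤ 2 * P := by nlinarith [hmul, hq, hK]
        have hfin : (t - P) * K ≤ 4 * P ^ 2 := by
          nlinarith [hq, mul_le_mul_of_nonneg_right ht2 ht0,
            mul_le_mul_of_nonneg_left ht2 hP0]
        have := (le_div_iff₀ hK).mpr hfin
        linarith
      rcases le_total s (K - s) with hmin | hmin
      · rw [min_eq_left hmin]
        exact key s hs0 (by linarith) hquad
      · rw [min_eq_right hmin]
        exact key (K - s) (by linarith) (by linarith) (by nlinarith [hquad])

/-- Reverse-set bound: if `H, G` are prefix-free sets of partial points with
`∪H = ∪G_rev` and `|H|·|G| ≤ |A|/4`, then `|∪H| ≥ (K/2)(1 + √(1 - 4|H||G|/K))` or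
`|∪H| ≤ (K/2)(1 - √(1 - 4|H||G|/K))` where `K = |A|`; in particular
`min(|∪H|, |A| - |∪H|) ≤ |H||G| + O(|H|²|G|²/|A|)`. -/
theorem stmt13 :
    ∃ Cst : ℝ, 0 < Cst ∧
      ∀ (α : Type) [DecidableEq α] (m : ℕ) (A : Fin m → Finset α),
        (∀ i, A i = A (Fin.rev i)) →
        ∀ H G : Finset (PPoint α m), PrefixFreeP H → PrefixFreeP G →
          4 * (H.card * G.card) ≤ (Fintype.piFinset A).card →
          unionCube A H = unionCubeRev A G →
          ((((Fintype.piFinset A).card : ℝ) / 2 *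
              (1 + Real.sqrt (1 - 4 * (H.card * G.card : ℝ) / (Fintype.piFinset A).card)) ≤
              (unionCube A H).card ∨
            ((unionCube A H).card : ℝ) ≤ ((Fintype.piFinset A).card : ℝ) / 2 *
              (1 - Real.sqrt (1 - 4 * (H.card * G.card : ℝ) / (Fintype.piFinset A).card))) ∧
          min ((unionCube A H).card : ℝ)
              (((Fintype.piFinset A).card : ℝ) - (unionCube A H).card) ≤
            (H.card * G.card : ℝ) +
              Cst * (H.card * G.card : ℝ) ^ 2 / (Fintype.piFinset A).card) := by
  refine ⟨4, by norm_num, ?_⟩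
  intro α _ m A _ H G hH hG hcard hEq
  have hnat := main_nat_ineq A H G hH hG hEq
  have hsub : unionCube A H ⊆ Fintype.piFinset A :=
    Finset.biUnion_subset.mpr (fun p _ => Finset.filter_subset _ _)
  have hsK : ((unionCube A H).card : ℝ) ≤ ((Fintype.piFinset A).card : ℝ) := by
    exact_mod_cast Finset.card_le_card hsub
  have h4 : 4 * ((H.card : ℝ) * G.card) ≤ ((Fintype.piFinset A).card : ℝ) := by
    exact_mod_cast hcard
  have hquad : ((unionCube A H).card : ℝ) * ((Fintype.piFinset A).card : ℝ) ≤
      ((unionCube A H).card : ℝ) * ((unionCube A H).card : ℝ) +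
        ((Fintype.piFinset A).card : ℝ) * ((H.card : ℝ) * G.card) := by
    exact_mod_cast hnat
  exact real_part ((Fintype.piFinset A).card : ℝ) ((unionCube A H).card : ℝ)
    ((H.card : ℝ) * G.card) (by positivity) hsK (by positivity) h4 hquad
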